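/- Let n₁, …, n_m ≥ 1 be integers, N = Σᵢ nᵢ, and let f(k) be the number of m-tuples (k₁,…,k_m) with 0 ≤ kᵢ ≤ nᵢ and Σᵢ kᵢ = k. Then f(⌊N/2⌋) ≥ (Πᵢ (nᵢ+1)) / (N+1). -/

import Mathlib

open Finset

/-- number of tuples `f` with `f i ≤ n i` and `∑ f i = k`. -/
def cnt (m : ℕ) (n : Fin m → ℕ) (k : ℕ) : ℕ :=
  ((Fintype.piFinset fun i => Finset.range (n i + 1)).filter fun f => ∑ i, f i = k).card

lemma cnt_total (m : ℕ) (n : Fin m → ℕ) :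
    ∑ k ∈ Finset.range (∑ i, n i + 1), cnt m n k = ∏ i, (n i + 1) := by
  classical
  have h := Finset.card_eq_sum_card_fiberwise
    (s := Fintype.piFinset fun i => Finset.range (n i + 1))
    (t := Finset.range (∑ i, n i + 1)) (f := fun f => ∑ i, f i) ?_
  · simp only [cnt]
    rw [← h]
    simp [Fintype.card_piFinset]
  · intro f hf
    simp only [Finset.mem_coe, Fintype.mem_piFinset, Finset.mem_range] at hf ⊢
    have : ∑ i, f i ≤ ∑ i, n i := Finset.sum_le_sum fun i _ => Nat.lt_succ_iff.mp (hf i)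
    omega

lemma cnt_symm (m : ℕ) (n : Fin m → ℕ) (k : ℕ) (hk : k ≤ ∑ i, n i) :
    cnt m n k = cnt m n (∑ i, n i - k) := by
  classical
  apply Finset.card_nbij' (i := fun f i => n i - f i) (j := fun f i => n i - f i)
  · intro f hf
    simp only [Finset.mem_coe, Finset.mem_filter, Fintype.mem_piFinset, Finset.mem_range, Nat.lt_succ_iff] at hf ⊢
    obtain ⟨h1, h2⟩ := hf
    refine ⟨fun i => Nat.sub_le _ _, ?_⟩
    have : ∑ i, (n i - f i) + ∑ i, f i = ∑ i, n i := by
      rw [← Finset.sum_add_distrib]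
      exact Finset.sum_congr rfl fun i _ => Nat.sub_add_cancel (h1 i)
    omega
  · intro f hf
    simp only [Finset.mem_coe, Finset.mem_filter, Fintype.mem_piFinset, Finset.mem_range, Nat.lt_succ_iff] at hf ⊢
    obtain ⟨h1, h2⟩ := hf
    refine ⟨fun i => Nat.sub_le _ _, ?_⟩
    have : ∑ i, (n i - f i) + ∑ i, f i = ∑ i, n i := by
      rw [← Finset.sum_add_distrib]
      exact Finset.sum_congr rfl fun i _ => Nat.sub_add_cancel (h1 i)
    omega
  · intro f hf
    simp only [Finset.mem_coe, Finset.mem_filter, Fintype.mem_piFinset, Finset.mem_range, Nat.lt_succ_iff] at hf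
    funext i
    exact Nat.sub_sub_self (hf.1 i)
  · intro f hf
    simp only [Finset.mem_coe, Finset.mem_filter, Fintype.mem_piFinset, Finset.mem_range, Nat.lt_succ_iff] at hf
    funext i
    exact Nat.sub_sub_self (hf.1 i)

lemma cnt_conv (m : ℕ) (n : Fin (m + 1) → ℕ) (k : ℕ) :
    cnt (m + 1) n k =
      ∑ t ∈ Finset.range (n 0 + 1), if t ≤ k then cnt m (Fin.tail n) (k - t) else 0 := by
  classical
  have h := Finset.card_eq_sum_card_fiberwise
    (s := ((Fintype.piFinset fun i => Finset.range (n i + 1)).filter fun f => ∑ i, f i = k))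
    (t := Finset.range (n 0 + 1)) (f := fun f => f 0) ?_
  · rw [cnt, h]
    refine Finset.sum_congr rfl fun t ht => ?_
    by_cases htk : t ≤ k
    · simp only [if_pos htk]
      apply Finset.card_nbij' (i := fun f => Fin.tail f) (j := fun g => Fin.cons t g)
      · intro f hf
        simp only [Finset.mem_coe, Finset.mem_filter, Fintype.mem_piFinset, Finset.mem_range,
          Nat.lt_succ_iff] at hf ⊢
        obtain ⟨⟨h1, h2⟩, h3⟩ := hf
        refine ⟨fun i => h1 i.succ, ?_⟩
        rw [Fin.sum_univ_succ] at h2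
        have htail : ∑ i, Fin.tail f i = ∑ i : Fin m, f i.succ := rfl
        clear h ht
        omega
      · intro g hg
        simp only [Finset.mem_coe, Finset.mem_filter, Fintype.mem_piFinset, Finset.mem_range,
          Nat.lt_succ_iff, Finset.mem_range] at hg ht ⊢
        obtain ⟨h1, h2⟩ := hg
        refine ⟨⟨fun i => ?_, ?_⟩, by simp⟩
        · induction i using Fin.cases with
          | zero => simpa using ht
          | succ j => simpa [Fin.tail] using h1 j
        · rw [Fin.sum_univ_succ]
          simp only [Fin.cons_zero, Fin.cons_succ]
          clear h
          omega
      · intro f hf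
        simp only [Finset.mem_coe, Finset.mem_filter] at hf
        rw [← hf.2]
        exact Fin.cons_self_tail f
      · intro g _
        exact Fin.tail_cons (α := fun _ : Fin (m + 1) => ℕ) t g
    · simp only [if_neg htk]
      rw [Finset.card_eq_zero]
      ext f
      simp only [Finset.mem_filter, Fintype.mem_piFinset, Finset.mem_range, Nat.lt_succ_iff,
        Finset.notMem_empty, iff_false]
      rintro ⟨⟨h1, h2⟩, h3⟩
      rw [Fin.sum_univ_succ] at h2
      clear h
      omega
  · intro f hf
    simp only [Finset.mem_coe, Finset.mem_filter, Fintype.mem_piFinset, Finset.mem_range, Nat.lt_succ_iff] at hf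
    simp only [Finset.mem_coe, Finset.mem_range, Nat.lt_succ_iff]
    exact hf.1 0

/-- generic chaining: symmetry + single steps up to the middle give full "monotone to middle". -/
lemma gen_mono (c : ℕ → ℕ) (N : ℕ) (hsym : ∀ k, k ≤ N → c k = c (N - k))
    (hstep : ∀ k, 2 * k + 1 ≤ N → c k ≤ c (k + 1)) :
    ∀ j j', j ≤ j' → j + j' ≤ N → c j ≤ c j' := by
  have chain : ∀ j j', j ≤ j' → 2 * j' ≤ N + 1 → c j ≤ c j' := by
    intro j j' hjj' h
    induction j' , hjj' using Nat.le_induction with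
    | base => exact le_refl _
    | succ j' hj' ih =>
      exact le_trans (ih (by omega)) (hstep j' (by omega))
  intro j j' hjj' hN
  by_cases h : 2 * j' ≤ N + 1
  · exact chain j j' hjj' h
  · have hj'N : j' ≤ N := by omega
    rw [hsym j' hj'N]
    exact chain j (N - j') (by omega) (by omega)

lemma cnt_mono : ∀ (m : ℕ) (n : Fin m → ℕ) (j j' : ℕ), j ≤ j' → j + j' ≤ ∑ i, n i →
    cnt m n j ≤ cnt m n j' := by
  intro m
  induction m with
  | zero =>
    intro n j j' h1 h2
    simp only [Finset.univ_eq_empty, Finset.sum_empty] at h2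
    have : j = j' := by omega
    rw [this]
  | succ m ih =>
    intro n
    apply gen_mono _ _ (cnt_symm _ n)
    intro k hk
    rw [cnt_conv, cnt_conv]
    rw [Finset.sum_range_succ, Finset.sum_range_succ' (fun t => if t ≤ k + 1 then
      cnt m (Fin.tail n) (k + 1 - t) else 0)]
    have e1 : ∀ t, (if t + 1 ≤ k + 1 then cnt m (Fin.tail n) (k + 1 - (t + 1)) else 0)
        = (if t ≤ k then cnt m (Fin.tail n) (k - t) else 0) := by
      intro t
      by_cases h : t ≤ k
      · rw [if_pos (by omega), if_pos h]
        congr 1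
        omega
      · rw [if_neg (by omega), if_neg h]
    simp only [e1]
    have hx : (if n 0 ≤ k then cnt m (Fin.tail n) (k - n 0) else 0)
        ≤ (if 0 ≤ k + 1 then cnt m (Fin.tail n) (k + 1 - 0) else 0) := by
      rw [if_pos (Nat.zero_le _), Nat.sub_zero]
      by_cases h : n 0 ≤ k
      · rw [if_pos h]
        have hN : 2 * k + 1 ≤ n 0 + ∑ i, Fin.tail n i := by
          rw [Fin.sum_univ_succ] at hk
          exact hk
        exact ih (Fin.tail n) (k - n 0) (k + 1) (by omega) (by omega)
      · rw [if_neg h]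
        exact Nat.zero_le _
    exact Nat.add_le_add (le_refl _) hx

lemma cnt_vanish (m : ℕ) (n : Fin m → ℕ) (k : ℕ) (hk : ∑ i, n i < k) : cnt m n k = 0 := by
  classical
  rw [cnt, Finset.card_eq_zero]
  ext f
  simp only [Finset.mem_filter, Fintype.mem_piFinset, Finset.mem_range, Nat.lt_succ_iff,
    Finset.notMem_empty, iff_false]
  rintro ⟨h1, h2⟩
  have : ∑ i, f i ≤ ∑ i, n i := Finset.sum_le_sum fun i _ => h1 i
  omega

lemma cnt_le_mid (m : ℕ) (n : Fin m → ℕ) (k : ℕ) :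
    cnt m n k ≤ cnt m n ((∑ i, n i) / 2) := by
  set N := ∑ i, n i with hN
  by_cases hkN : k ≤ N
  · by_cases h : k ≤ N / 2
    · exact cnt_mono m n k (N / 2) h (by omega)
    · rw [cnt_symm m n k hkN]
      exact cnt_mono m n (N - k) (N / 2) (by omega) (by omega)
  · rw [cnt_vanish m n k (by omega)]
    exact Nat.zero_le _

theorem bounded_compositions_max_ge_average (m : ℕ) (hm : 1 ≤ m) (n : Fin m → ℕ)
    (hn : ∀ i, 1 ≤ n i) :
    ((∏ i, (n i + 1) : ℕ) : ℝ) / (((∑ i, n i : ℕ) : ℝ) + 1) ≤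
      (Nat.card {f : Fin m → ℕ // (∀ i, f i ≤ n i) ∧ ∑ i, f i = (∑ i, n i) / 2} : ℝ) := by
  classical
  set N := ∑ i, n i with hN
  have hcard : Nat.card {f : Fin m → ℕ // (∀ i, f i ≤ n i) ∧ ∑ i, f i = N / 2}
      = cnt m n (N / 2) := by
    rw [cnt, ← Nat.card_eq_finsetCard]
    apply Nat.card_congr
    apply Equiv.subtypeEquivRight
    intro f
    simp [Fintype.mem_piFinset, Nat.lt_succ_iff]
  rw [hcard]
  have key : (∏ i, (n i + 1)) ≤ (N + 1) * cnt m n (N / 2) := by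
    rw [← cnt_total m n]
    calc ∑ k ∈ Finset.range (N + 1), cnt m n k
        ≤ ∑ _k ∈ Finset.range (N + 1), cnt m n (N / 2) :=
          Finset.sum_le_sum fun k _ => cnt_le_mid m n k
      _ = (N + 1) * cnt m n (N / 2) := by simp [mul_comm]
  rw [div_le_iff₀ (by positivity)]
  calc ((∏ i, (n i + 1) : ℕ) : ℝ) ≤ (((N + 1) * cnt m n (N / 2) : ℕ) : ℝ) := by
        exact_mod_cast key
    _ = (cnt m n (N / 2) : ℝ) * ((N : ℝ) + 1) := by push_cast; ring
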